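/- Let χ be a Dirichlet character modulo N with N ≥ 3, let κ ≥ 1 be an integer with κ ≡ e(χ) (mod 2), and set N̄ := ⌊(N−1)/2⌋ and ζ_κ := e^{2πi/κ}. For j with χ(j) ≠ 0 define χ(j)^{1/κ} := e^{i·arg(χ(j))/κ} where the argument is taken in [0, 2π), and set χ(j)^{1/κ} := 0 when χ(j) = 0. Then for every complex number t, ∏_{n=1}^{∞} (1 − χ(n) t^{κ}/n^{κ}) = (2^{N−1}/N)^{κ/2} · ∏_{j=1}^{N̄} ∏_{l=1}^{κ} sin( π (j − χ(j)^{1/κ} ζ_κ^{l} t) / N ), where (2^{N−1}/N)^{κ/2} is the positive real power. -/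

import Mathlib

open Complex Filter Finset Topology

noncomputable section

/-- The parity `e(χ) ∈ {0,1}` of a Dirichlet character: `χ(-1) = (-1)^{e(χ)}`. -/
def charParity {N : ℕ} (χ : DirichletCharacter ℂ N) : ℕ :=
  if χ (-1) = 1 then 0 else 1

/-- The argument of a complex number, normalized to lie in `[0, 2π)`. -/
def arg2pi (z : ℂ) : ℝ :=
  if 0 ≤ Complex.arg z then Complex.arg z else Complex.arg z + 2 * Real.pi

/-- The `κ`-th root `χ(j)^{1/κ} = e^{i·arg(χ(j))/κ}` (argument in `[0,2π)`),
with `χ(j)^{1/κ} = 0` when `χ(j) = 0`. -/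
def chiRoot {N : ℕ} (χ : DirichletCharacter ℂ N) (κ : ℕ) (j : ℕ) : ℂ :=
  if χ j = 0 then 0 else Complex.exp (Complex.I * arg2pi (χ j) / κ)

namespace IPDC

/-! ### Auxiliary lemmas -/

variable {M : Type*} [CommMonoid M]

lemma prod_Ioc_shift (f : ℕ → M) (a b : ℕ) :
    ∏ n ∈ Finset.Ioc a b, f n = ∏ i ∈ Finset.range (b - a), f (a + i + 1) := by
  rw [← Finset.Ico_add_one_add_one_eq_Ioc, Finset.prod_Ico_eq_prod_range]
  rcases le_or_gt a b with h | h
  · have : b + 1 - (a + 1) = b - a := by omega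
    rw [this]
    exact Finset.prod_congr rfl fun i _ => by rw [show a + 1 + i = a + i + 1 by omega]
  · have h1 : b + 1 - (a + 1) = 0 := by omega
    have h2 : b - a = 0 := by omega
    rw [h1, h2]
    simp

lemma prod_blocks (f : ℕ → M) (N K : ℕ) :
    ∏ n ∈ Finset.Icc 1 (K * N), f n = ∏ i ∈ Finset.range N, ∏ m ∈ Finset.range K, f (m * N + i + 1) := by
  induction K with
  | zero => simp
  | succ K ih =>
    have h0 : Finset.Icc 1 ((K+1) * N) = Finset.Ioc 0 ((K+1) * N) := by
      rw [← Finset.Icc_add_one_left_eq_Ioc, zero_add]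
    have h1 : Finset.Icc 1 (K * N) = Finset.Ioc 0 (K * N) := by
      rw [← Finset.Icc_add_one_left_eq_Ioc, zero_add]
    rw [h0, ← Finset.prod_Ioc_consecutive f (Nat.zero_le (K * N))
      (by nlinarith : K * N ≤ (K+1) * N), ← h1, ih, prod_Ioc_shift]
    have h2 : (K+1) * N - K * N = N := by rw [Nat.succ_mul]; omega
    rw [h2, ← Finset.prod_mul_distrib]
    exact Finset.prod_congr rfl fun i _ => by
      rw [Finset.prod_range_succ, show K * N + i + 1 = K * N + i + 1 from rfl]

lemma prod_pair (g : ℕ → M) (N : ℕ) (hN : 1 ≤ N) (hmid : ∀ r, 2 * r = N → g r = 1) :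
    ∏ r ∈ Finset.Icc 1 (N - 1), g r = ∏ j ∈ Finset.Icc 1 ((N - 1) / 2), (g j * g (N - j)) := by
  set h := (N - 1) / 2 with hh
  have hsplit : (∏ r ∈ Finset.Ioc 0 h, g r) * ∏ r ∈ Finset.Ioc h (N - 1), g r
      = ∏ r ∈ Finset.Ioc 0 (N - 1), g r :=
    Finset.prod_Ioc_consecutive g (Nat.zero_le h) (by omega)
  have hIcc : Finset.Icc 1 (N - 1) = Finset.Ioc 0 (N - 1) := by rw [← Finset.Icc_add_one_left_eq_Ioc, zero_add]
  have hIcc2 : Finset.Icc 1 h = Finset.Ioc 0 h := by rw [← Finset.Icc_add_one_left_eq_Ioc, zero_add]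
  have hrefl : ∏ r ∈ Finset.Ioc h (N - 1), g r = ∏ i ∈ Finset.Icc 1 (N - 1 - h), g (N - i) := by
    refine Finset.prod_nbij' (fun r => N - r) (fun i => N - i) ?_ ?_ ?_ ?_ ?_
    · intro a ha; simp only [Finset.mem_Ioc] at ha; simp only [Finset.mem_Icc]; omega
    · intro a ha; simp only [Finset.mem_Icc] at ha; simp only [Finset.mem_Ioc]; omega
    · intro a ha; simp only [Finset.mem_Ioc] at ha; show N - (N - a) = a; omega
    · intro a ha; simp only [Finset.mem_Icc] at ha; show N - (N - a) = a; omega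
    · intro a ha; simp only [Finset.mem_Ioc] at ha
      rw [show N - (N - a) = a by omega]
  rw [hIcc, ← hsplit, hrefl, ← hIcc2]
  rcases (by omega : N - 1 - h = h ∨ (N - 1 - h = h + 1 ∧ 2 * (N - (h+1)) = N)) with hc | ⟨hc, hc2⟩
  · rw [hc, ← Finset.prod_mul_distrib]
  · rw [hc, Finset.prod_Icc_succ_top (by omega : 1 ≤ h + 1), hmid _ hc2, mul_one,
      ← Finset.prod_mul_distrib]

private def E (x : ℂ) (K : ℕ) : ℂ :=
  (Real.pi : ℂ) * x * ∏ i ∈ Finset.range K, (1 - x ^ 2 / ((i : ℂ) + 1) ^ 2)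

private lemma E_succ (x : ℂ) (K : ℕ) :
    E x (K + 1) = E x K * (1 - x ^ 2 / ((K : ℂ) + 1) ^ 2) := by
  unfold E; rw [Finset.prod_range_succ]; ring

lemma lemA (N j : ℕ) (hj1 : 1 ≤ j) (hjN : j < N) (a : ℂ) :
    Tendsto (fun K : ℕ => ∏ m ∈ Finset.range K,
        ((1 - a / ((j : ℂ) + (m : ℂ) * N)) * (1 + a / (((m : ℂ) + 1) * N - (j : ℂ)))))
      atTop (𝓝 (Complex.sin ((Real.pi : ℂ) * ((j : ℂ) - a) / N) /
        Complex.sin ((Real.pi : ℂ) * j / N))) := by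
  have hNn : N ≠ 0 := by omega
  have hN0 : (0:ℝ) < N := by exact_mod_cast Nat.pos_of_ne_zero hNn
  have hNC : (N:ℂ) ≠ 0 := by exact_mod_cast hNn
  set wR : ℝ := (j:ℝ) / N with hwR
  have hw0 : 0 < wR := div_pos (by exact_mod_cast hj1) hN0
  have hw1 : wR < 1 := by
    rw [hwR, div_lt_one hN0]; exact_mod_cast hjN
  set w : ℂ := (wR : ℂ) with hw
  set z : ℂ := ((j : ℂ) - a) / N with hz
  have hjw : (j : ℂ) = N * w := by
    rw [hw, hwR]; push_cast; field_simp
  have ha : a = N * (w - z) := by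
    rw [hz, mul_sub, ← hjw]; field_simp; ring
  -- nonvanishing facts about w
  have hmw : ∀ m : ℕ, ((m : ℂ) + w) ≠ 0 := by
    intro m
    have : ((m : ℝ) + wR) ≠ 0 := by positivity
    rw [hw]; exact_mod_cast fun h => this (by exact_mod_cast h)
  have hmw' : ∀ m : ℕ, ((m : ℂ) + 1 - w) ≠ 0 := by
    intro m
    have h0 : ((m : ℝ) + 1 - wR) ≠ 0 := by nlinarith [Nat.cast_nonneg (α := ℝ) m]
    intro h
    apply h0
    have : (((m : ℝ) + 1 - wR : ℝ) : ℂ) = 0 := by push_cast; rw [← hw]; linear_combination h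
    exact_mod_cast this
  have hEw : ∀ K, E w K ≠ 0 := by
    intro K
    unfold E
    apply mul_ne_zero
    · apply mul_ne_zero
      · simpa using Real.pi_ne_zero
      · rw [hw]; exact_mod_cast hw0.ne'
    · rw [Finset.prod_ne_zero_iff]
      intro i _
      have h1 : wR ^ 2 / ((i:ℝ) + 1) ^ 2 < 1 := by
        rw [div_lt_one (by positivity)]
        nlinarith [Nat.cast_nonneg (α := ℝ) i]
      intro h
      have : ((1 - wR ^ 2 / ((i:ℝ) + 1) ^ 2 : ℝ) : ℂ) = 0 := by
        push_cast; rw [← hw]; linear_combination h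
      have := (Complex.ofReal_eq_zero).mp this
      linarith
  -- the factor identities
  have f1 : ∀ m : ℕ, (1 - a / ((j : ℂ) + (m : ℂ) * N)) = ((m : ℂ) + z) / ((m : ℂ) + w) := by
    intro m
    have hden : (j : ℂ) + (m : ℂ) * N = N * ((m : ℂ) + w) := by rw [hjw]; ring
    rw [hden, ha, mul_div_mul_left _ _ hNC, one_sub_div (hmw m)]
    congr 1
    ring
  have f2 : ∀ m : ℕ, (1 + a / (((m : ℂ) + 1) * N - (j : ℂ)))
      = ((m : ℂ) + 1 - z) / ((m : ℂ) + 1 - w) := by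
    intro m
    have hden : ((m : ℂ) + 1) * N - (j : ℂ) = N * ((m : ℂ) + 1 - w) := by rw [hjw]; ring
    rw [hden, ha, mul_div_mul_left _ _ hNC, one_add_div (hmw' m)]
    congr 1
    ring
  -- rewrite partial products
  have hcastsucc : ∀ K : ℕ, ((K : ℂ) + 1) ≠ 0 := by
    intro K
    have : ((K + 1 : ℕ) : ℂ) ≠ 0 := Nat.cast_ne_zero.mpr (Nat.succ_ne_zero K)
    push_cast at this
    exact this
  have hPeq : ∀ K, (∏ m ∈ Finset.range K,
      ((1 - a / ((j : ℂ) + (m : ℂ) * N)) * (1 + a / (((m : ℂ) + 1) * N - (j : ℂ)))))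
      = ∏ m ∈ Finset.range K,
      ((((m : ℂ) + z) / ((m : ℂ) + w)) * (((m : ℂ) + 1 - z) / ((m : ℂ) + 1 - w))) := by
    intro K
    exact Finset.prod_congr rfl fun m _ => by rw [f1 m, f2 m]
  -- key identity
  have key : ∀ K : ℕ, (∏ m ∈ Finset.range (K + 1),
      ((((m : ℂ) + z) / ((m : ℂ) + w)) * (((m : ℂ) + 1 - z) / ((m : ℂ) + 1 - w))))
      = (E z K / E w K) * (((K : ℂ) + 1 - z) / ((K : ℂ) + 1 - w)) := by
    intro K
    induction K with
    | zero =>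
      rw [Finset.prod_range_one]
      simp only [E, Finset.prod_range_zero, mul_one, Nat.cast_zero]
      have hπ : (Real.pi : ℂ) ≠ 0 := by simpa using Real.pi_ne_zero
      have hwne : w ≠ 0 := by rw [hw]; exact_mod_cast hw0.ne'
      have d1 : (0 + w) * (0 + 1 - w) ≠ 0 :=
        mul_ne_zero (by simpa using hmw 0) (by simpa using hmw' 0)
      have d2 : (Real.pi : ℂ) * w * (0 + 1 - w) ≠ 0 :=
        mul_ne_zero (mul_ne_zero hπ hwne) (by simpa using hmw' 0)
      rw [div_mul_div_comm, div_mul_div_comm, div_eq_div_iff d1 d2]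
      ring
    | succ K ih =>
      rw [Finset.prod_range_succ, ih, E_succ, E_succ]
      have h1 : ((K : ℂ) + 1 + w) ≠ 0 := by
        have := hmw (K + 1); push_cast at this; exact this
      have h4 := hmw' K
      have h5 : (1 - w ^ 2 / ((K : ℂ) + 1) ^ 2) ≠ 0 := by
        have := hEw (K + 1)
        rw [E_succ] at this
        exact right_ne_zero_of_mul this
      have h7 := hcastsucc K
      have S : (((K : ℂ) + 1 - z) / ((K : ℂ) + 1 - w)) * (((K : ℂ) + 1 + z) / ((K : ℂ) + 1 + w))
          = (1 - z ^ 2 / ((K : ℂ) + 1) ^ 2) / (1 - w ^ 2 / ((K : ℂ) + 1) ^ 2) := by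
        rw [div_mul_div_comm, div_eq_div_iff (mul_ne_zero h4 h1) h5]
        field_simp
        ring
      rw [mul_div_mul_comm, ← S]
      push_cast
      ring
  -- limits
  have hsinw : Complex.sin ((Real.pi : ℂ) * w) ≠ 0 := by
    have : (Real.pi : ℂ) * w = ((Real.pi * wR : ℝ) : ℂ) := by rw [hw]; push_cast; ring
    rw [this, ← Complex.ofReal_sin]
    have : 0 < Real.sin (Real.pi * wR) := by
      apply Real.sin_pos_of_pos_of_lt_pi
      · positivity
      · nlinarith [Real.pi_pos]
    exact_mod_cast this.ne'
  have hquot : Tendsto (fun K => E z K / E w K) atTop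
      (𝓝 (Complex.sin ((Real.pi : ℂ) * z) / Complex.sin ((Real.pi : ℂ) * w))) :=
    (Complex.tendsto_euler_sin_prod z).div (Complex.tendsto_euler_sin_prod w) hsinw
  have hzero : ∀ c : ℂ, Tendsto (fun K : ℕ => c / ((K : ℂ) + 1)) atTop (𝓝 0) := by
    intro c
    rw [tendsto_zero_iff_norm_tendsto_zero]
    have heq : ∀ K : ℕ, ‖c / ((K : ℂ) + 1)‖ = ‖c‖ / ((K : ℝ) + 1) := by
      intro K
      rw [norm_div]
      congr 1
      have : ((K : ℂ) + 1) = (((K : ℝ) + 1 : ℝ) : ℂ) := by push_cast; ring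
      rw [this, Complex.norm_real, Real.norm_eq_abs, abs_of_pos (by positivity)]
    simp_rw [heq]
    have := (tendsto_const_div_atTop_nhds_zero_nat ‖c‖).comp (tendsto_add_atTop_nat 1)
    refine this.congr fun K => ?_
    simp only [Function.comp]
    push_cast
    ring_nf
  have hratio : Tendsto (fun K : ℕ => (((K : ℂ) + 1 - z) / ((K : ℂ) + 1 - w))) atTop (𝓝 1) := by
    have heq : ∀ K : ℕ, ((K : ℂ) + 1 - z) / ((K : ℂ) + 1 - w)
        = (1 - z / ((K : ℂ) + 1)) / (1 - w / ((K : ℂ) + 1)) := by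
      intro K
      have h6 : ((K : ℂ) + 1) ≠ 0 := hcastsucc K
      rw [div_eq_div_iff]
      · field_simp
      · exact hmw' K
      · intro h
        apply hmw' K
        have : ((K : ℂ) + 1) - w = 0 := by
          have := sub_eq_zero.mp h
          field_simp at this ⊢
          linear_combination this
        linear_combination this
    simp_rw [heq]
    have h1 : Tendsto (fun K : ℕ => (1 - z / ((K : ℂ) + 1))) atTop (𝓝 1) := by
      simpa using tendsto_const_nhds.sub (hzero z)
    have h2 : Tendsto (fun K : ℕ => (1 - w / ((K : ℂ) + 1))) atTop (𝓝 1) := by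
      simpa using tendsto_const_nhds.sub (hzero w)
    have h3 := h1.div h2 one_ne_zero
    rw [div_one] at h3
    exact h3
  have hmain : Tendsto (fun K => ∏ m ∈ Finset.range (K + 1),
      ((((m : ℂ) + z) / ((m : ℂ) + w)) * (((m : ℂ) + 1 - z) / ((m : ℂ) + 1 - w)))) atTop
      (𝓝 (Complex.sin ((Real.pi : ℂ) * z) / Complex.sin ((Real.pi : ℂ) * w))) := by
    have := hquot.mul hratio
    rw [mul_one] at this
    exact this.congr fun K => (key K).symm
  have hmain2 : Tendsto (fun K => ∏ m ∈ Finset.range K,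
      ((((m : ℂ) + z) / ((m : ℂ) + w)) * (((m : ℂ) + 1 - z) / ((m : ℂ) + 1 - w)))) atTop
      (𝓝 (Complex.sin ((Real.pi : ℂ) * z) / Complex.sin ((Real.pi : ℂ) * w))) :=
    (tendsto_add_atTop_iff_nat 1).mp hmain
  have hfin : (Real.pi : ℂ) * z = (Real.pi : ℂ) * ((j : ℂ) - a) / N := by
    rw [hz]; ring
  have hfin2 : (Real.pi : ℂ) * w = (Real.pi : ℂ) * (j : ℂ) / N := by
    rw [hw, hwR]; push_cast; ring
  rw [← hfin, ← hfin2]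
  exact hmain2.congr fun K => (hPeq K).symm


lemma abs_one_sub_exp (θ : ℝ) (h0 : 0 ≤ θ) (h2 : θ ≤ 2 * Real.pi) :
    ‖1 - Complex.exp (θ * I)‖ = 2 * Real.sin (θ / 2) := by
  have he : (1 : ℂ) - Complex.exp (↑θ * I) = ↑(1 - Real.cos θ) + ↑(-Real.sin θ) * I := by
    rw [Complex.exp_mul_I, ← Complex.ofReal_cos, ← Complex.ofReal_sin]
    push_cast
    ring
  rw [he, Complex.norm_def, Complex.normSq_add_mul_I, Real.sin_half_eq_sqrt h0 h2]
  have hsq : (1 - Real.cos θ) ^ 2 + (-Real.sin θ) ^ 2 = 2 ^ 2 * ((1 - Real.cos θ) / 2) := by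
    have := Real.sin_sq_add_cos_sq θ
    nlinarith
  rw [hsq, Real.sqrt_mul (by positivity), Real.sqrt_sq (by norm_num)]

lemma prod_two_sin (N : ℕ) (hN : 3 ≤ N) :
    ∏ j ∈ Finset.Icc 1 (N - 1), (2 * Real.sin (Real.pi * j / N)) = N := by
  have hNn : N ≠ 0 := by omega
  have hN0 : (0:ℝ) < N := by exact_mod_cast Nat.pos_of_ne_zero hNn
  set μ : ℂ := Complex.exp (2 * Real.pi * I / N) with hμ
  have hprim : IsPrimitiveRoot μ N := Complex.isPrimitiveRoot_exp N hNn
  have hprim' : IsPrimitiveRoot μ ((N - 1) + 1) := by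
    rw [show N - 1 + 1 = N by omega]; exact hprim
  have hp := hprim'.prod_one_sub_pow_eq_order
  have habs : ∏ k ∈ Finset.range (N - 1), ‖1 - μ ^ (k + 1)‖ = N := by
    rw [← norm_prod, hp]
    have : ((N - 1 : ℕ) : ℂ) + 1 = ((N : ℝ) : ℂ) := by
      push_cast [Nat.cast_sub (by omega : 1 ≤ N)]; ring
    rw [this, Complex.norm_real, Real.norm_eq_abs, abs_of_pos hN0]
  have hterm : ∀ k ∈ Finset.range (N - 1),
      ‖1 - μ ^ (k + 1)‖ = 2 * Real.sin (Real.pi * (k + 1) / N) := by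
    intro k hk
    rw [Finset.mem_range] at hk
    have hμk : μ ^ (k + 1) = Complex.exp (((2 * Real.pi * (k + 1) / N : ℝ) : ℂ) * I) := by
      rw [hμ, ← Complex.exp_nat_mul]
      congr 1
      push_cast
      ring
    rw [hμk, abs_one_sub_exp]
    · congr 1
      field_simp
    · positivity
    · rw [div_le_iff₀ hN0]
      have hkN : (k:ℝ) + 2 ≤ (N:ℝ) := by exact_mod_cast (by omega : k + 2 ≤ N)
      nlinarith [Real.pi_pos]
  rw [Finset.prod_congr rfl hterm] at habs
  rw [show Finset.Icc 1 (N - 1) = Finset.Ioc 0 (N - 1) by rw [← Finset.Icc_add_one_left_eq_Ioc, zero_add],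
    prod_Ioc_shift]
  rw [show N - 1 - 0 = N - 1 by omega]
  calc ∏ i ∈ Finset.range (N - 1), (2 * Real.sin (Real.pi * (0 + i + 1 : ℕ) / N))
      = ∏ x ∈ Finset.range (N - 1), (2 * Real.sin (Real.pi * ((x:ℝ) + 1) / N)) :=
        Finset.prod_congr rfl fun i _ => by push_cast; ring_nf
    _ = N := habs

lemma sin_prod_half_pos (N : ℕ) (hN : 3 ≤ N) :
    0 < ∏ j ∈ Finset.Icc 1 ((N - 1) / 2), Real.sin (Real.pi * j / N) := by
  apply Finset.prod_pos
  intro j hj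
  rw [Finset.mem_Icc] at hj
  have hN0 : (0:ℝ) < N := by exact_mod_cast (by omega : 0 < N)
  apply Real.sin_pos_of_pos_of_lt_pi
  · have : (0:ℝ) < j := by exact_mod_cast (by omega : 0 < j)
    positivity
  · rw [div_lt_iff₀ hN0]
    have : (j:ℝ) < N := by exact_mod_cast (by omega : j < N)
    nlinarith [Real.pi_pos]

lemma sin_prod_half_sq (N : ℕ) (hN : 3 ≤ N) :
    (∏ j ∈ Finset.Icc 1 ((N - 1) / 2), Real.sin (Real.pi * j / N)) ^ 2 = N / 2 ^ (N - 1) := by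
  have hNn : N ≠ 0 := by omega
  have hN0 : (0:ℝ) < N := by exact_mod_cast Nat.pos_of_ne_zero hNn
  have h2 := prod_two_sin N hN
  rw [Finset.prod_mul_distrib, Finset.prod_const, Nat.card_Icc] at h2
  rw [show N - 1 + 1 - 1 = N - 1 by omega] at h2
  have hfull : ∏ j ∈ Finset.Icc 1 (N - 1), Real.sin (Real.pi * j / N) = N / 2 ^ (N - 1) := by
    rw [eq_div_iff (by positivity : (2:ℝ) ^ (N - 1) ≠ 0), mul_comm]
    exact h2
  have hpair := prod_pair (fun j => Real.sin (Real.pi * j / N)) N (by omega) ?_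
  · rw [hpair] at hfull
    rw [← hfull]
    rw [← Finset.prod_pow]
    apply Finset.prod_congr rfl
    intro j hj
    rw [Finset.mem_Icc] at hj
    have hsub : Real.sin (Real.pi * ((N - j : ℕ) : ℝ) / N) = Real.sin (Real.pi * j / N) := by
      rw [Nat.cast_sub (by omega : j ≤ N)]
      rw [show Real.pi * ((N:ℝ) - j) / N = Real.pi - Real.pi * j / N by field_simp]
      exact Real.sin_pi_sub _
    rw [hsub]
    ring
  · intro r hr
    have hrne : (r:ℝ) ≠ 0 := by
      have : r ≠ 0 := by omega
      exact_mod_cast this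
    have harg : Real.pi * r / N = Real.pi / 2 := by
      rw [show (N:ℝ) = 2 * r by exact_mod_cast hr.symm]
      field_simp
    show Real.sin (Real.pi * r / N) = 1
    rw [harg]
    exact Real.sin_pi_div_two


lemma prod_linear (κ : ℕ) (hκ : 1 ≤ κ) (c u : ℂ) :
    ∏ l ∈ Finset.Icc 1 κ, (1 - c * Complex.exp (2 * Real.pi * I / κ) ^ l * u)
      = 1 - c ^ κ * u ^ κ := by
  have hκn : κ ≠ 0 := by omega
  set ζ : ℂ := Complex.exp (2 * Real.pi * I / κ) with hζ
  have hprim : IsPrimitiveRoot ζ κ := Complex.isPrimitiveRoot_exp κ hκn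
  have base := IsPrimitiveRoot.pow_sub_pow_eq_prod_sub_mul (1 : ℂ) (c * u)
    (by omega : 0 < κ) hprim
  rw [one_pow] at base
  have hbij : ∏ l ∈ Finset.Icc 1 κ, (1 - c * ζ ^ l * u)
      = ∏ ξ ∈ Polynomial.nthRootsFinset κ (1 : ℂ), (1 - ξ * (c * u)) := by
    refine Finset.prod_bij (fun l _ => ζ ^ l) ?_ ?_ ?_ ?_
    · intro l hl
      rw [Polynomial.mem_nthRootsFinset (by omega : 0 < κ)]
      rw [← pow_mul, mul_comm l κ, pow_mul, hprim.pow_eq_one, one_pow]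
    · intro l₁ hl₁ l₂ hl₂ heq
      simp only [Finset.mem_Icc] at hl₁ hl₂
      rcases eq_or_lt_of_le hl₁.2 with h1 | h1 <;> rcases eq_or_lt_of_le hl₂.2 with h2 | h2
      · omega
      · exfalso
        have : ζ ^ l₂ = ζ ^ 0 := by
          rw [← heq, h1, hprim.pow_eq_one, pow_zero]
        have := hprim.pow_inj h2 (by omega) this
        omega
      · exfalso
        have : ζ ^ l₁ = ζ ^ 0 := by
          rw [heq, h2, hprim.pow_eq_one, pow_zero]
        have := hprim.pow_inj h1 (by omega) this
        omega
      · exact hprim.pow_inj h1 h2 heq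
    · intro b hb
      rw [Polynomial.mem_nthRootsFinset (by omega : 0 < κ)] at hb
      have : NeZero κ := ⟨hκn⟩
      obtain ⟨i, hik, hi⟩ := hprim.eq_pow_of_pow_eq_one hb
      rcases Nat.eq_zero_or_pos i with h0 | h0
      · exact ⟨κ, Finset.mem_Icc.mpr ⟨by omega, le_rfl⟩, by
          show ζ ^ κ = b
          rw [hprim.pow_eq_one, ← hi, h0, pow_zero]⟩
      · exact ⟨i, Finset.mem_Icc.mpr ⟨by omega, by omega⟩, hi⟩
    · intro l hl
      ring
  rw [hbij, ← base, mul_pow]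

lemma chiRoot_pow {N : ℕ} (χ : DirichletCharacter ℂ N) (κ : ℕ) (hκ : 1 ≤ κ)
    (j : ℕ) (hj : χ j ≠ 0) : (chiRoot χ κ j) ^ κ = χ j := by
  have hκC : (κ : ℂ) ≠ 0 := by exact_mod_cast (by omega : κ ≠ 0)
  have habs : ‖χ j‖ = 1 := by
    have hu : IsUnit ((j : ℕ) : ZMod N) := by
      by_contra h
      exact hj (χ.map_nonunit h)
    have := χ.unit_norm_eq_one hu.unit
    rw [IsUnit.unit_spec] at this
    exact this
  rw [chiRoot, if_neg hj, ← Complex.exp_nat_mul]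
  have harg : (κ : ℂ) * (Complex.I * (arg2pi (χ j)) / κ) = (arg2pi (χ j)) * Complex.I := by
    field_simp
  rw [harg]
  have hexp : Complex.exp ((arg2pi (χ j) : ℂ) * Complex.I)
      = Complex.exp ((Complex.arg (χ j) : ℂ) * Complex.I) := by
    rw [arg2pi]
    split
    · rfl
    · push_cast
      rw [add_mul, Complex.exp_add, Complex.exp_two_pi_mul_I, mul_one]
  rw [hexp]
  have := Complex.norm_mul_exp_arg_mul_I (χ j)
  rw [habs] at this
  simpa using this

lemma chi_neg_one {N : ℕ} (χ : DirichletCharacter ℂ N) (κ : ℕ)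
    (hpar : κ % 2 = charParity χ) : χ (-1) = (-1 : ℂ) ^ κ := by
  have hsq : χ (-1) * χ (-1) = 1 := by
    rw [← map_mul]
    norm_num
  unfold charParity at hpar
  by_cases h : χ (-1) = 1
  · rw [if_pos h] at hpar
    rw [h, (Nat.even_iff.mpr hpar).neg_one_pow]
  · rw [if_neg h] at hpar
    have h2 : (χ (-1) - 1) * (χ (-1) + 1) = 0 := by linear_combination hsq
    rcases mul_eq_zero.mp h2 with h3 | h3
    · exact absurd (sub_eq_zero.mp h3) h
    · rw [eq_neg_of_add_eq_zero_left h3, (Nat.odd_iff.mpr hpar).neg_one_pow]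


lemma tail_tendsto (F : ℕ → ℂ) (N : ℕ) (hN : 0 < N) (L : ℂ)
    (hmul : Tendsto (fun K : ℕ => ∏ n ∈ Finset.Icc 1 (K * N), F n) atTop (𝓝 L))
    (hF : Tendsto F atTop (𝓝 1)) :
    Tendsto (fun M : ℕ => ∏ n ∈ Finset.Icc 1 M, F n) atTop (𝓝 L) := by
  have hdecomp : ∀ M : ℕ, ∏ n ∈ Finset.Icc 1 M, F n
      = (∏ n ∈ Finset.Icc 1 ((M / N) * N), F n) *
        ∏ r ∈ Finset.range N, (if (M / N) * N + r + 1 ≤ M then F ((M / N) * N + r + 1) else 1) := by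
    intro M
    have hq : (M / N) * N ≤ M := Nat.div_mul_le_self M N
    have hmod : M - (M / N) * N < N := by
      have h1 := Nat.div_add_mod' M N
      have h2 := Nat.mod_lt M hN
      omega
    rw [show Finset.Icc 1 M = Finset.Ioc 0 M by rw [← Finset.Icc_add_one_left_eq_Ioc, zero_add],
      ← Finset.prod_Ioc_consecutive F (Nat.zero_le _) hq,
      show Finset.Ioc 0 ((M / N) * N) = Finset.Icc 1 ((M / N) * N) by rw [← Finset.Icc_add_one_left_eq_Ioc, zero_add],
      prod_Ioc_shift]
    congr 1
    rw [← Finset.prod_subset (Finset.range_subset_range.mpr hmod.le)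
      (fun x _ hx => by
        rw [if_neg]
        rw [Finset.mem_range] at hx
        omega)]
    exact Finset.prod_congr rfl fun i hi => by
      rw [Finset.mem_range] at hi
      rw [if_pos (by omega)]
  have hdiv : Tendsto (fun M : ℕ => M / N) atTop atTop := by
    apply tendsto_atTop_atTop.mpr
    intro b
    exact ⟨b * N, fun a ha => (Nat.le_div_iff_mul_le hN).mpr ha⟩
  have hcomp : Tendsto (fun M : ℕ => ∏ n ∈ Finset.Icc 1 ((M / N) * N), F n) atTop (𝓝 L) :=
    hmul.comp hdiv
  have hG : Tendsto (fun M : ℕ => ∏ r ∈ Finset.range N,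
      (if (M / N) * N + r + 1 ≤ M then F ((M / N) * N + r + 1) else 1)) atTop (𝓝 1) := by
    have := tendsto_finset_prod (f := fun r (M : ℕ) =>
        (if (M / N) * N + r + 1 ≤ M then F ((M / N) * N + r + 1) else 1))
      (a := fun _ => (1 : ℂ)) (x := atTop) (Finset.range N) ?_
    · simpa using this
    · intro r _
      rw [Metric.tendsto_atTop]
      intro ε hε
      obtain ⟨n₀, hn₀⟩ := Metric.tendsto_atTop.mp hF ε hε
      refine ⟨n₀ + N, fun M hM => ?_⟩
      have hmod : M % N < N := Nat.mod_lt M hN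
      have hqe : (M / N) * N = M - M % N := by
        have := Nat.div_add_mod' M N
        omega
      split
      · apply hn₀
        omega
      · simpa using hε
  have := hcomp.mul hG
  rw [mul_one] at this
  exact this.congr fun M => (hdecomp M).symm


end IPDC

/-- **Formula (3.4)**: for a Dirichlet character `χ` mod `N ≥ 3` and `κ ≥ 1` with
`κ ≡ e(χ) (mod 2)`, for every `t ∈ ℂ`,
`∏_{n≥1} (1 - χ(n) t^κ/n^κ)
  = (2^{N-1}/N)^{κ/2} ∏_{j=1}^{N̄} ∏_{l=1}^{κ} sin(π(j - χ(j)^{1/κ} ζ_κ^l t)/N)`,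
where `N̄ = ⌊(N-1)/2⌋`, `ζ_κ = e^{2πi/κ}`, and `(2^{N-1}/N)^{κ/2}` is the positive real
power; the infinite product is expressed as the limit of its partial products. -/
theorem infinite_product_dirichlet_character
    (N : ℕ) (hN : 3 ≤ N) (χ : DirichletCharacter ℂ N)
    (κ : ℕ) (hκ : 1 ≤ κ) (hpar : κ % 2 = charParity χ) (t : ℂ) :
    Tendsto (fun M : ℕ => ∏ n ∈ Finset.Icc 1 M, (1 - χ n * t ^ κ / (n : ℂ) ^ κ))
      atTop
      (𝓝 ((((2 ^ (N - 1) / N : ℝ) ^ ((κ : ℝ) / 2) : ℝ) : ℂ) *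
        ∏ j ∈ Finset.Icc 1 ((N - 1) / 2), ∏ l ∈ Finset.Icc 1 κ,
          Complex.sin ((Real.pi : ℂ) *
            ((j : ℂ) - chiRoot χ κ j * Complex.exp (2 * Real.pi * Complex.I / κ) ^ l * t) / N))) := by
  have hκn : κ ≠ 0 := by omega
  have hNn : N ≠ 0 := by omega
  haveI : Fact (1 < N) := ⟨by omega⟩
  haveI : NeZero N := ⟨hNn⟩
  have hN0 : (0:ℝ) < N := by exact_mod_cast Nat.pos_of_ne_zero hNn
  set ζ : ℂ := Complex.exp (2 * Real.pi * Complex.I / κ) with hζ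
  set F : ℕ → ℂ := fun n => 1 - χ n * t ^ κ / (n : ℂ) ^ κ with hFdef
  set Nb : ℕ := (N - 1) / 2 with hNb
  set T : ℕ → ℂ := fun j => ∏ l ∈ Finset.Icc 1 κ,
    (Complex.sin ((Real.pi : ℂ) * ((j : ℂ) - chiRoot χ κ j * ζ ^ l * t) / N) /
      Complex.sin ((Real.pi : ℂ) * (j : ℂ) / N)) with hTdef
  -- basic character facts
  have hper : ∀ r m : ℕ, χ ((r + m * N : ℕ) : ZMod N) = χ ((r : ℕ) : ZMod N) := by
    intro r m
    congr 1
    push_cast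
    simp [ZMod.natCast_self]
  have hχ0 : χ ((N : ℕ) : ZMod N) = 0 := by
    rw [ZMod.natCast_self]
    exact χ.map_nonunit (by simpa using not_isUnit_zero)
  have hχhalf : ∀ r : ℕ, 2 * r = N → χ ((r : ℕ) : ZMod N) = 0 := by
    intro r hr
    apply χ.map_nonunit
    intro hu
    rw [ZMod.isUnit_iff_coprime] at hu
    have hdvd : r ∣ N := ⟨2, by omega⟩
    have h1 := Nat.dvd_gcd dvd_rfl hdvd
    rw [hu] at h1
    have := Nat.dvd_one.mp h1
    omega
  have hχneg : ∀ j : ℕ, j ≤ N → χ (((N - j : ℕ) : ℕ) : ZMod N) = (-1:ℂ)^κ * χ ((j : ℕ) : ZMod N) := by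
    intro j hj
    have hcast : (((N - j : ℕ) : ℕ) : ZMod N) = (-1) * ((j : ℕ) : ZMod N) := by
      rw [Nat.cast_sub hj, ZMod.natCast_self]
      ring
    rw [hcast, map_mul, IPDC.chi_neg_one χ κ hpar]
  have hsinne : ∀ j : ℕ, 1 ≤ j → j < N →
      Complex.sin ((Real.pi : ℂ) * (j : ℂ) / N) ≠ 0 := by
    intro j h1 h2
    have harg : (Real.pi : ℂ) * (j : ℂ) / N = ((Real.pi * j / N : ℝ) : ℂ) := by
      push_cast; ring
    rw [harg, ← Complex.ofReal_sin]
    have hj0 : (0:ℝ) < j := by exact_mod_cast h1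
    have hjN : (j:ℝ) < N := by exact_mod_cast h2
    have : 0 < Real.sin (Real.pi * j / N) := by
      apply Real.sin_pos_of_pos_of_lt_pi
      · positivity
      · rw [div_lt_iff₀ hN0]
        nlinarith [Real.pi_pos]
    exact_mod_cast this.ne'
  -- convergence of each paired residue block
  have hblock : ∀ j : ℕ, 1 ≤ j → j ≤ Nb →
      Tendsto (fun K : ℕ => ∏ m ∈ Finset.range K, (F (j + m * N) * F ((N - j) + m * N)))
        atTop (𝓝 (T j)) := by
    intro j hj1 hj2
    have hjN : j < N := by omega
    by_cases hj0 : χ ((j : ℕ) : ZMod N) = 0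
    · have hT1 : T j = 1 := by
        rw [hTdef]
        apply Finset.prod_eq_one
        intro l _
        rw [show chiRoot χ κ j = 0 from by rw [chiRoot, if_pos hj0], zero_mul, zero_mul, sub_zero]
        exact div_self (hsinne j hj1 hjN)
      have hBK : ∀ K : ℕ, ∏ m ∈ Finset.range K, (F (j + m * N) * F ((N - j) + m * N)) = 1 := by
        intro K
        apply Finset.prod_eq_one
        intro m _
        have h1 : F (j + m * N) = 1 := by
          simp only [hFdef]
          rw [hper j m, hj0]
          simp
        have h2 : F ((N - j) + m * N) = 1 := by
          simp only [hFdef]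
          rw [hper (N - j) m, hχneg j hjN.le, hj0]
          simp
        rw [h1, h2, mul_one]
      rw [hT1]
      exact tendsto_const_nhds.congr fun K => (hBK K).symm
    · have hc : (chiRoot χ κ j) ^ κ = χ ((j : ℕ) : ZMod N) := IPDC.chiRoot_pow χ κ hκ j hj0
      set c : ℂ := chiRoot χ κ j with hcdef
      have hFj : ∀ m : ℕ, F (j + m * N)
          = ∏ l ∈ Finset.Icc 1 κ, (1 - (c * ζ ^ l * t) / ((j : ℂ) + (m : ℂ) * N)) := by
        intro m
        have hcast : ((j + m * N : ℕ) : ℂ) = (j : ℂ) + (m : ℂ) * N := by push_cast; ring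
        have hpl := IPDC.prod_linear κ hκ c (t / ((j : ℂ) + (m : ℂ) * N))
        calc F (j + m * N) = 1 - χ ((j : ℕ) : ZMod N) * t ^ κ / ((j : ℂ) + (m : ℂ) * N) ^ κ := by
              simp only [hFdef]; rw [hper j m, hcast]
          _ = 1 - c ^ κ * (t / ((j : ℂ) + (m : ℂ) * N)) ^ κ := by
              rw [hc, div_pow, mul_div_assoc]
          _ = ∏ l ∈ Finset.Icc 1 κ, (1 - c * ζ ^ l * (t / ((j : ℂ) + (m : ℂ) * N))) := hpl.symm
          _ = ∏ l ∈ Finset.Icc 1 κ, (1 - (c * ζ ^ l * t) / ((j : ℂ) + (m : ℂ) * N)) :=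
              Finset.prod_congr rfl fun l _ => by rw [mul_div_assoc]
      have hFj' : ∀ m : ℕ, F ((N - j) + m * N)
          = ∏ l ∈ Finset.Icc 1 κ, (1 + (c * ζ ^ l * t) / (((m : ℂ) + 1) * N - (j : ℂ))) := by
        intro m
        have hcast : (((N - j) + m * N : ℕ) : ℂ) = ((m : ℂ) + 1) * N - (j : ℂ) := by
          push_cast [Nat.cast_sub hjN.le]; ring
        have hpl := IPDC.prod_linear κ hκ (-c) (t / (((m : ℂ) + 1) * N - (j : ℂ)))
        calc F ((N - j) + m * N)
            = 1 - ((-1:ℂ)^κ * χ ((j : ℕ) : ZMod N)) * t ^ κ / (((m : ℂ) + 1) * N - (j : ℂ)) ^ κ := by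
              simp only [hFdef]; rw [hper (N - j) m, hχneg j hjN.le, hcast]
          _ = 1 - (-c) ^ κ * (t / (((m : ℂ) + 1) * N - (j : ℂ))) ^ κ := by
              rw [← hc]; ring
          _ = ∏ l ∈ Finset.Icc 1 κ, (1 - (-c) * ζ ^ l * (t / (((m : ℂ) + 1) * N - (j : ℂ)))) :=
              hpl.symm
          _ = ∏ l ∈ Finset.Icc 1 κ, (1 + (c * ζ ^ l * t) / (((m : ℂ) + 1) * N - (j : ℂ))) :=
              Finset.prod_congr rfl fun l _ => by ring
      have hB : ∀ K : ℕ, ∏ m ∈ Finset.range K, (F (j + m * N) * F ((N - j) + m * N))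
          = ∏ l ∈ Finset.Icc 1 κ, ∏ m ∈ Finset.range K,
              ((1 - (c * ζ ^ l * t) / ((j : ℂ) + (m : ℂ) * N)) *
                (1 + (c * ζ ^ l * t) / (((m : ℂ) + 1) * N - (j : ℂ)))) := by
        intro K
        rw [← Finset.prod_comm]
        exact Finset.prod_congr rfl fun m _ => by
          rw [hFj m, hFj' m, ← Finset.prod_mul_distrib]
      have hlim := tendsto_finset_prod (f := fun (l : ℕ) (K : ℕ) => ∏ m ∈ Finset.range K,
            ((1 - (c * ζ ^ l * t) / ((j : ℂ) + (m : ℂ) * N)) *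
              (1 + (c * ζ ^ l * t) / (((m : ℂ) + 1) * N - (j : ℂ)))))
          (a := fun l => Complex.sin ((Real.pi : ℂ) * ((j : ℂ) - (c * ζ ^ l * t)) / N) /
            Complex.sin ((Real.pi : ℂ) * (j : ℂ) / N))
          (x := atTop) (Finset.Icc 1 κ)
          (fun l _ => IPDC.lemA N j hj1 hjN (c * ζ ^ l * t))
      have hTeq : T j = ∏ l ∈ Finset.Icc 1 κ,
          (Complex.sin ((Real.pi : ℂ) * ((j : ℂ) - (c * ζ ^ l * t)) / N) /
            Complex.sin ((Real.pi : ℂ) * (j : ℂ) / N)) := by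
        rw [hTdef]
      rw [hTeq]
      exact hlim.congr fun K => (hB K).symm
  -- grouping of partial products at multiples of N
  have hgroup : ∀ K : ℕ, ∏ n ∈ Finset.Icc 1 (K * N), F n
      = ∏ j ∈ Finset.Icc 1 Nb, ∏ m ∈ Finset.range K, (F (j + m * N) * F ((N - j) + m * N)) := by
    intro K
    rw [IPDC.prod_blocks F N K]
    have h1 : ∏ i ∈ Finset.range N, ∏ m ∈ Finset.range K, F (m * N + i + 1)
        = ∏ r ∈ Finset.Icc 1 N, ∏ m ∈ Finset.range K, F (r + m * N) := by
      rw [show Finset.Icc 1 N = Finset.Ioc 0 N by rw [← Finset.Icc_add_one_left_eq_Ioc, zero_add],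
        IPDC.prod_Ioc_shift, show N - 0 = N by omega]
      exact Finset.prod_congr rfl fun i _ => Finset.prod_congr rfl fun m _ => by
        rw [show m * N + i + 1 = (0 + i + 1) + m * N by omega]
    rw [h1]
    have h2 : ∏ r ∈ Finset.Icc 1 N, ∏ m ∈ Finset.range K, F (r + m * N)
        = (∏ r ∈ Finset.Icc 1 (N - 1), ∏ m ∈ Finset.range K, F (r + m * N)) *
          ∏ m ∈ Finset.range K, F (N + m * N) := by
      have := Finset.prod_Icc_succ_top (show 1 ≤ (N - 1) + 1 by omega)
        (fun r => ∏ m ∈ Finset.range K, F (r + m * N))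
      rw [show N - 1 + 1 = N by omega] at this
      exact this
    have h3 : ∏ m ∈ Finset.range K, F (N + m * N) = 1 := by
      apply Finset.prod_eq_one
      intro m _
      simp only [hFdef]
      rw [hper N m, hχ0]
      simp
    rw [h2, h3, mul_one]
    have h4 := IPDC.prod_pair (fun r => ∏ m ∈ Finset.range K, F (r + m * N)) N (by omega) ?_
    · rw [h4]
      exact Finset.prod_congr rfl fun j _ => Finset.prod_mul_distrib.symm
    · intro r hr
      apply Finset.prod_eq_one
      intro m _
      simp only [hFdef]
      rw [hper r m, hχhalf r hr]
      simp
  -- limit along multiples of N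
  have hmullim : Tendsto (fun K : ℕ => ∏ n ∈ Finset.Icc 1 (K * N), F n) atTop
      (𝓝 (∏ j ∈ Finset.Icc 1 Nb, T j)) := by
    have := tendsto_finset_prod (f := fun (j : ℕ) (K : ℕ) =>
        ∏ m ∈ Finset.range K, (F (j + m * N) * F ((N - j) + m * N)))
      (a := T) (x := atTop) (Finset.Icc 1 Nb)
      (fun j hj => hblock j (Finset.mem_Icc.mp hj).1 (Finset.mem_Icc.mp hj).2)
    exact this.congr fun K => (hgroup K).symm
  -- terms tend to 1
  have hF1 : Tendsto F atTop (𝓝 1) := by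
    have h0 : Tendsto (fun n : ℕ => F n - 1) atTop (𝓝 0) := by
      refine squeeze_zero_norm' ?_ (tendsto_const_div_atTop_nhds_zero_nat (‖t‖ ^ κ))
      · filter_upwards [eventually_ge_atTop 1] with n hn
        have hn1 : (1:ℝ) ≤ n := by exact_mod_cast hn
        simp only [hFdef]
        rw [show (1 : ℂ) - χ n * t ^ κ / (n : ℂ) ^ κ - 1 = -(χ n * t ^ κ / (n : ℂ) ^ κ) by ring,
          norm_neg, norm_div, norm_mul, norm_pow, norm_pow]
        have hnn : ‖(n : ℂ)‖ = (n : ℝ) := by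
          rw [Complex.norm_natCast]
        rw [hnn]
        have hb1 : ‖χ ((n : ℕ) : ZMod N)‖ ≤ 1 := χ.norm_le_one _
        have hb2 : (n : ℝ) ^ 1 ≤ (n : ℝ) ^ κ := pow_le_pow_right₀ hn1 hκ
        rw [div_le_div_iff₀ (by positivity) (by positivity)]
        calc ‖χ ((n : ℕ) : ZMod N)‖ * ‖t‖ ^ κ * (n:ℝ)
            ≤ 1 * ‖t‖ ^ κ * (n:ℝ)^κ := by
              apply mul_le_mul (by nlinarith [pow_nonneg (norm_nonneg t) κ]) ?_ (by positivity) (by positivity)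
              simpa using hb2
          _ = ‖t‖ ^ κ * (n:ℝ)^κ := by ring
    have := h0.add (tendsto_const_nhds (x := (1:ℂ)))
    simp only [sub_add_cancel, zero_add] at this
    exact this
  -- full limit
  have hfull : Tendsto (fun M : ℕ => ∏ n ∈ Finset.Icc 1 M, F n) atTop
      (𝓝 (∏ j ∈ Finset.Icc 1 Nb, T j)) :=
    IPDC.tail_tendsto F N (by omega) _ hmullim hF1
  -- identify the limit value
  set D : ℝ := ∏ j ∈ Finset.Icc 1 Nb, Real.sin (Real.pi * j / N) with hDdef
  have hD2 : D ^ 2 = N / 2 ^ (N - 1) := by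
    rw [hDdef, hNb]; exact IPDC.sin_prod_half_sq N hN
  have hDpos : 0 < D := by
    rw [hDdef, hNb]; exact IPDC.sin_prod_half_pos N hN
  have hCkey : ((2:ℝ) ^ (N - 1) / N) ^ ((κ:ℝ) / 2) * D ^ κ = 1 := by
    have hq : (2:ℝ) ^ (N - 1) / N = (D ^ 2)⁻¹ := by
      rw [hD2, inv_div]
    rw [hq, Real.inv_rpow (by positivity)]
    have h5 : (D ^ 2 : ℝ) ^ ((κ:ℝ) / 2) = D ^ κ := by
      rw [← Real.rpow_natCast D 2, ← Real.rpow_mul hDpos.le,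
        show ((2:ℕ):ℝ) * ((κ:ℝ) / 2) = (κ:ℝ) by push_cast; ring, Real.rpow_natCast]
    rw [h5, inv_mul_cancel₀ (by positivity)]
  have hd : ∏ j ∈ Finset.Icc 1 Nb, (Complex.sin ((Real.pi : ℂ) * (j : ℂ) / N)) ^ κ
      = ((D ^ κ : ℝ) : ℂ) := by
    have : ∀ j ∈ Finset.Icc 1 Nb, (Complex.sin ((Real.pi : ℂ) * (j : ℂ) / N)) ^ κ
        = ((Real.sin (Real.pi * j / N) ^ κ : ℝ) : ℂ) := by
      intro j _
      rw [show (Real.pi : ℂ) * (j : ℂ) / N = ((Real.pi * j / N : ℝ) : ℂ) by push_cast; ring,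
        ← Complex.ofReal_sin, ← Complex.ofReal_pow]
    rw [Finset.prod_congr rfl this, ← Complex.ofReal_prod, hDdef, ← Finset.prod_pow]
  have hval : ∏ j ∈ Finset.Icc 1 Nb, T j
      = (((2 ^ (N - 1) / N : ℝ) ^ ((κ : ℝ) / 2) : ℝ) : ℂ) *
        ∏ j ∈ Finset.Icc 1 Nb, ∏ l ∈ Finset.Icc 1 κ,
          Complex.sin ((Real.pi : ℂ) * ((j : ℂ) - chiRoot χ κ j * ζ ^ l * t) / N) := by
    have hTj : ∀ j ∈ Finset.Icc 1 Nb, T j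
        = (∏ l ∈ Finset.Icc 1 κ,
            Complex.sin ((Real.pi : ℂ) * ((j : ℂ) - chiRoot χ κ j * ζ ^ l * t) / N)) /
          (Complex.sin ((Real.pi : ℂ) * (j : ℂ) / N)) ^ κ := by
      intro j _
      simp only [hTdef]
      rw [Finset.prod_div_distrib, Finset.prod_const, Nat.card_Icc,
        show κ + 1 - 1 = κ by omega]
    rw [Finset.prod_congr rfl hTj, Finset.prod_div_distrib, hd]
    have hDC : ((D ^ κ : ℝ) : ℂ) ≠ 0 := by
      have : (0:ℝ) < D ^ κ := by positivity
      exact_mod_cast this.ne'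
    rw [div_eq_iff hDC]
    have hCC : (((2 ^ (N - 1) / N : ℝ) ^ ((κ : ℝ) / 2) : ℝ) : ℂ) * ((D ^ κ : ℝ) : ℂ) = 1 := by
      rw [← Complex.ofReal_mul]
      exact_mod_cast congrArg (fun x : ℝ => (x : ℂ)) hCkey
    linear_combination (-(∏ j ∈ Finset.Icc 1 Nb, ∏ l ∈ Finset.Icc 1 κ,
      Complex.sin ((Real.pi : ℂ) * ((j : ℂ) - chiRoot χ κ j * ζ ^ l * t) / N))) * hCC
  rw [← hval]
  exact hfull

end
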